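/- arXiv:2110.02714 — 3 statements merged into one kernel-verified Lean document; each statement's English description precedes it below -/
import Mathlib

section
/- Let (μ_n) be probability measures on [0,1] with means θ_n → θ and suppose ∫ g dμ_n → 0 for a fixed continuous g: [0,1]→[0,∞) with g>0 on (0,1) and g(0)=g(1)=0. Then every weak limit point of (μ_n) equals (1−θ)δ_0 + θδ_1; in particular μ_n ⇒ (1−θ)δ_0 + θδ_1. -/
open MeasureTheory

/-- The endpoint `0` of `[0,1]`. -/
noncomputable def pt0 : Set.Icc (0 : ℝ) 1 := ⟨0, Set.left_mem_Icc.mpr zero_le_one⟩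
/-- The endpoint `1` of `[0,1]`. -/
noncomputable def pt1 : Set.Icc (0 : ℝ) 1 := ⟨1, Set.right_mem_Icc.mpr zero_le_one⟩

/-- Abstract clustering step. If probability measures `μ_n` on `[0,1]` have means
converging to `θ` and `∫ g dμ_n → 0` for a fixed continuous `g ≥ 0` vanishing exactly on
`{0,1}`, then every weak limit point of `(μ_n)` equals `(1−θ)δ_0 + θδ_1`; in particular
`μ_n ⇒ (1−θ)δ_0 + θδ_1` (formulated via test functions). -/
theorem stmt14 (θ : ℝ) (hθ : θ ∈ Set.Icc (0 : ℝ) 1)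
    (μ : ℕ → ProbabilityMeasure (Set.Icc (0 : ℝ) 1))
    (g : C(Set.Icc (0 : ℝ) 1, ℝ))
    (hg0 : g pt0 = 0) (hg1 : g pt1 = 0)
    (hgpos : ∀ x : Set.Icc (0 : ℝ) 1, 0 < (x : ℝ) → (x : ℝ) < 1 → 0 < g x)
    (hmean : Filter.Tendsto (fun n => ∫ x, (x : ℝ) ∂(μ n : Measure (Set.Icc (0 : ℝ) 1)))
      Filter.atTop (nhds θ))
    (hgint : Filter.Tendsto (fun n => ∫ x, g x ∂(μ n : Measure (Set.Icc (0 : ℝ) 1)))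
      Filter.atTop (nhds 0)) :
    (∀ ν : ProbabilityMeasure (Set.Icc (0 : ℝ) 1),
      MapClusterPt ν Filter.atTop μ →
      ∀ f : C(Set.Icc (0 : ℝ) 1, ℝ),
        (∫ x, f x ∂(ν : Measure (Set.Icc (0 : ℝ) 1)))
          = (1 - θ) * f pt0 + θ * f pt1) ∧
    (∀ f : C(Set.Icc (0 : ℝ) 1, ℝ),
      Filter.Tendsto (fun n => ∫ x, f x ∂(μ n : Measure (Set.Icc (0 : ℝ) 1)))
        Filter.atTop (nhds ((1 - θ) * f pt0 + θ * f pt1))) := by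
  -- nonnegativity of g
  have hgnn : ∀ x : (Set.Icc (0 : ℝ) 1), 0 ≤ g x := by
    rintro ⟨x, hx0, hx1⟩
    rcases eq_or_lt_of_le hx0 with h0 | h0
    · have : (⟨x, hx0, hx1⟩ : (Set.Icc (0 : ℝ) 1)) = pt0 := Subtype.ext h0.symm
      rw [this, hg0]
    rcases eq_or_lt_of_le hx1 with h1 | h1
    · have : (⟨x, hx0, hx1⟩ : (Set.Icc (0 : ℝ) 1)) = pt1 := Subtype.ext h1
      rw [this, hg1]
    · exact (hgpos _ h0 h1).le
  -- integrability of continuous functions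
  have hint : ∀ (φ : C((Set.Icc (0 : ℝ) 1), ℝ)) (n : ℕ), Integrable φ (μ n : Measure (Set.Icc (0 : ℝ) 1)) := fun φ n =>
    (BoundedContinuousFunction.mkOfCompact φ).integrable _
  have hintx : ∀ n : ℕ, Integrable (fun x : (Set.Icc (0 : ℝ) 1) => (x : ℝ)) (μ n : Measure (Set.Icc (0 : ℝ) 1)) := fun n =>
    hint ⟨fun x => (x : ℝ), continuous_subtype_val⟩ n
  -- main convergence statement
  have key : ∀ f : C((Set.Icc (0 : ℝ) 1), ℝ),
      Filter.Tendsto (fun n => ∫ x, f x ∂(μ n : Measure (Set.Icc (0 : ℝ) 1)))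
        Filter.atTop (nhds ((1 - θ) * f pt0 + θ * f pt1)) := by
    intro f
    set c0 := f pt0 with hc0
    set c1 := f pt1 with hc1
    set h : C((Set.Icc (0 : ℝ) 1), ℝ) := f - ⟨fun x => c0 + (x : ℝ) * (c1 - c0),
      continuous_const.add (continuous_subtype_val.mul continuous_const)⟩ with hh
    have hhx : ∀ x : (Set.Icc (0 : ℝ) 1), h x = f x - (c0 + (x : ℝ) * (c1 - c0)) := fun x => rfl
    have hpt0 : h pt0 = 0 := by
      rw [hhx]
      have : ((pt0 : (Set.Icc (0 : ℝ) 1)) : ℝ) = 0 := rfl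
      rw [this]; ring
    have hpt1 : h pt1 = 0 := by
      rw [hhx]
      have : ((pt1 : (Set.Icc (0 : ℝ) 1)) : ℝ) = 1 := rfl
      rw [this]; ring
    -- the key pointwise bound
    have bound : ∀ ε : ℝ, 0 < ε → ∃ C : ℝ, 0 ≤ C ∧ ∀ x : (Set.Icc (0 : ℝ) 1), |h x| ≤ ε + C * g x := by
      intro ε hε
      set S : Set (Set.Icc (0 : ℝ) 1) := {x : (Set.Icc (0 : ℝ) 1) | ε ≤ |h x|} with hS
      have hS_closed : IsClosed S := isClosed_le continuous_const h.continuous.abs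
      have hS_comp : IsCompact S := hS_closed.isCompact
      rcases S.eq_empty_or_nonempty with hSe | hSne
      · refine ⟨0, le_refl 0, fun x => ?_⟩
        have : x ∉ S := by rw [hSe]; exact Set.notMem_empty x
        have : ¬ ε ≤ |h x| := this
        linarith [not_le.mp this]
      · obtain ⟨x₀, hx₀S, hx₀min⟩ :=
          hS_comp.exists_isMinOn hSne g.continuous.continuousOn
        have hδ : 0 < g x₀ := by
          have hne : h x₀ ≠ 0 := by
            intro hcon
            have : ε ≤ |h x₀| := hx₀S
            rw [hcon, abs_zero] at this; linarith
          obtain ⟨x, hx0, hx1⟩ := x₀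
          rcases eq_or_lt_of_le hx0 with h0 | h0
          · exfalso; apply hne
            have : (⟨x, hx0, hx1⟩ : (Set.Icc (0 : ℝ) 1)) = pt0 := Subtype.ext h0.symm
            rw [this, hpt0]
          rcases eq_or_lt_of_le hx1 with h1 | h1
          · exfalso; apply hne
            have : (⟨x, hx0, hx1⟩ : (Set.Icc (0 : ℝ) 1)) = pt1 := Subtype.ext h1
            rw [this, hpt1]
          · exact hgpos _ h0 h1
        refine ⟨‖h‖ / g x₀, div_nonneg (norm_nonneg h) hδ.le, fun x => ?_⟩
        by_cases hx : ε ≤ |h x|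
        · have hxS : x ∈ S := hx
          have hgx : g x₀ ≤ g x := hx₀min hxS
          have h1 : |h x| ≤ ‖h‖ := by
            have := h.norm_coe_le_norm x
            rwa [Real.norm_eq_abs] at this
          have h2 : ‖h‖ = ‖h‖ / g x₀ * g x₀ := (div_mul_cancel₀ _ hδ.ne').symm
          have h3 : ‖h‖ / g x₀ * g x₀ ≤ ‖h‖ / g x₀ * g x :=
            mul_le_mul_of_nonneg_left hgx (div_nonneg (norm_nonneg h) hδ.le)
          nlinarith
        · have : |h x| ≤ ε := (not_le.mp hx).le
          have : 0 ≤ ‖h‖ / g x₀ * g x :=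
            mul_nonneg (div_nonneg (norm_nonneg h) hδ.le) (hgnn x)
          linarith [(not_le.mp hx).le]
    -- ∫ h → 0
    have hhto0 : Filter.Tendsto (fun n => ∫ x, h x ∂(μ n : Measure (Set.Icc (0 : ℝ) 1)))
        Filter.atTop (nhds 0) := by
      rw [NormedAddCommGroup.tendsto_nhds_zero]
      intro ε hε
      obtain ⟨C, hC, hCb⟩ := bound (ε / 2) (half_pos hε)
      have hCg : Filter.Tendsto (fun n => C * ∫ x, g x ∂(μ n : Measure (Set.Icc (0 : ℝ) 1)))
          Filter.atTop (nhds 0) := by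
        have := hgint.const_mul C
        simpa using this
      have hev : ∀ᶠ n in Filter.atTop, C * ∫ x, g x ∂(μ n : Measure (Set.Icc (0 : ℝ) 1)) < ε / 2 :=
        hCg.eventually_lt_const (half_pos hε)
      filter_upwards [hev] with n hn
      have hi1 : |∫ x, h x ∂(μ n : Measure (Set.Icc (0 : ℝ) 1))| ≤ ∫ x, |h x| ∂(μ n : Measure (Set.Icc (0 : ℝ) 1)) := by
        simpa [Real.norm_eq_abs] using
          norm_integral_le_integral_norm (μ := (μ n : Measure (Set.Icc (0 : ℝ) 1))) (fun x => h x)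
      have hi2 : ∫ x, |h x| ∂(μ n : Measure (Set.Icc (0 : ℝ) 1))
          ≤ ∫ x, (ε / 2 + C * g x) ∂(μ n : Measure (Set.Icc (0 : ℝ) 1)) := by
        apply integral_mono (hint h n).abs
        · exact (integrable_const _).add ((hint g n).const_mul C)
        · exact fun x => hCb x
      have hi3 : ∫ x, (ε / 2 + C * g x) ∂(μ n : Measure (Set.Icc (0 : ℝ) 1))
          = ε / 2 + C * ∫ x, g x ∂(μ n : Measure (Set.Icc (0 : ℝ) 1)) := by
        rw [integral_add (integrable_const _) ((hint g n).const_mul C),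
          integral_const, integral_const_mul]
        simp
      rw [Real.norm_eq_abs]
      calc |∫ x, h x ∂(μ n : Measure (Set.Icc (0 : ℝ) 1))| ≤ ε / 2 + C * ∫ x, g x ∂(μ n : Measure (Set.Icc (0 : ℝ) 1)) := by
            rw [← hi3]; exact hi1.trans hi2
        _ < ε / 2 + ε / 2 := by linarith
        _ = ε := by ring
    -- split the integral
    have hsplit : ∀ n, ∫ x, f x ∂(μ n : Measure (Set.Icc (0 : ℝ) 1))
        = (∫ x, h x ∂(μ n : Measure (Set.Icc (0 : ℝ) 1)))
          + (c0 + (∫ x, (x : ℝ) ∂(μ n : Measure (Set.Icc (0 : ℝ) 1))) * (c1 - c0)) := by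
      intro n
      have hfL : ∀ x : (Set.Icc (0 : ℝ) 1), f x = h x + (c0 + (x : ℝ) * (c1 - c0)) := by
        intro x; rw [hhx]; ring
      have hintL : Integrable (fun x : (Set.Icc (0 : ℝ) 1) => c0 + (x : ℝ) * (c1 - c0)) (μ n : Measure (Set.Icc (0 : ℝ) 1)) :=
        (integrable_const _).add ((hintx n).mul_const _)
      calc ∫ x, f x ∂(μ n : Measure (Set.Icc (0 : ℝ) 1))
          = ∫ x, (h x + (c0 + (x : ℝ) * (c1 - c0))) ∂(μ n : Measure (Set.Icc (0 : ℝ) 1)) := by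
            congr 1; funext x; exact hfL x
        _ = (∫ x, h x ∂(μ n : Measure (Set.Icc (0 : ℝ) 1)))
            + ∫ x, (c0 + (x : ℝ) * (c1 - c0)) ∂(μ n : Measure (Set.Icc (0 : ℝ) 1)) :=
            integral_add (hint h n) hintL
        _ = (∫ x, h x ∂(μ n : Measure (Set.Icc (0 : ℝ) 1)))
            + (c0 + (∫ x, (x : ℝ) ∂(μ n : Measure (Set.Icc (0 : ℝ) 1))) * (c1 - c0)) := by
            rw [integral_add (integrable_const _) ((hintx n).mul_const _),
              integral_const, integral_mul_const]
            simp
    have hfinal : Filter.Tendsto (fun n => ∫ x, f x ∂(μ n : Measure (Set.Icc (0 : ℝ) 1)))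
        Filter.atTop (nhds (0 + (c0 + θ * (c1 - c0)))) := by
      simp only [hsplit]
      exact hhto0.add (tendsto_const_nhds.add (hmean.mul_const _))
    have : (0 : ℝ) + (c0 + θ * (c1 - c0)) = (1 - θ) * c0 + θ * c1 := by ring
    rwa [this] at hfinal
  refine ⟨?_, key⟩
  intro ν hν f
  obtain ⟨U, hU, hT⟩ := mapClusterPt_iff_ultrafilter.mp hν
  have h1 := (ProbabilityMeasure.tendsto_iff_forall_integral_tendsto.mp hT)
    (BoundedContinuousFunction.mkOfCompact f)
  have h2 := (key f).mono_left hU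
  simp only [BoundedContinuousFunction.mkOfCompact_apply] at h1
  exact tendsto_nhds_unique h1 h2
end

section
/- Let μ_n be probability measures on [0,1]² with first marginal means ∫x dμ_n → θ, such that the first marginals converge weakly to (1−θ)δ_0 + θδ_1, and ∫ xy dμ_n → θ as well as ∫(1−x)(1−y) dμ_n → 1−θ. Then μ_n converges weakly to (1−θ)δ_{(0,0)} + θδ_{(1,1)}. -/
open MeasureTheory

namespace Stmt15Aux

abbrev K := Set.Icc (0 : ℝ) 1

noncomputable def hfun (p : K × K) : ℝ := (p.1 : ℝ) * (1 - (p.1 : ℝ)) + |(p.1 : ℝ) - (p.2 : ℝ)|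

lemma hfun_cont : Continuous hfun := by unfold hfun; fun_prop

lemma hfun_nonneg (p : K × K) : 0 ≤ hfun p := by
  have h1 := p.1.2.1; have h2 := p.1.2.2
  have := abs_nonneg ((p.1 : ℝ) - (p.2 : ℝ))
  unfold hfun; nlinarith

lemma hfun_eq_zero {p : K × K} (hp : hfun p = 0) : p = (pt0, pt0) ∨ p = (pt1, pt1) := by
  have h1 := p.1.2.1; have h2 := p.1.2.2
  have habs : 0 ≤ |(p.1 : ℝ) - (p.2 : ℝ)| := abs_nonneg _
  have hq : 0 ≤ (p.1 : ℝ) * (1 - (p.1 : ℝ)) := by nlinarith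
  unfold hfun at hp
  have hq0 : (p.1 : ℝ) * (1 - (p.1 : ℝ)) = 0 := by linarith
  have habs0 : |(p.1 : ℝ) - (p.2 : ℝ)| = 0 := by linarith
  have hxy : (p.1 : ℝ) = (p.2 : ℝ) := by
    have := abs_eq_zero.mp habs0; linarith
  rcases mul_eq_zero.mp hq0 with h | h
  · left
    have e1 : p.1 = pt0 := Subtype.ext (by simpa [pt0] using h)
    have e2 : p.2 = pt0 := Subtype.ext (by simp [pt0, ← hxy, h])
    exact Prod.ext e1 e2
  · right
    have hx1 : (p.1 : ℝ) = 1 := by linarith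
    have e1 : p.1 = pt1 := Subtype.ext (by simpa [pt1] using hx1)
    have e2 : p.2 = pt1 := Subtype.ext (by simp [pt1, ← hxy, hx1])
    exact Prod.ext e1 e2

lemma integK {f : K × K → ℝ} (hf : Continuous f) (ν : Measure (K × K))
    [IsProbabilityMeasure ν] : Integrable f ν :=
  hf.integrable_of_hasCompactSupport (HasCompactSupport.of_compactSpace f)

end Stmt15Aux

open Stmt15Aux

/-- Two-component clustering lemma. If probability measures `μ_n` on `[0,1]²` have first
marginal means converging to `θ`, first marginals converging weakly to
`(1−θ)δ_0 + θδ_1`, and `∫ xy dμ_n → θ`, `∫ (1−x)(1−y) dμ_n → 1−θ`, then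
`μ_n ⇒ (1−θ)δ_{(0,0)} + θδ_{(1,1)}` (formulated via test functions). -/
theorem stmt15 (θ : ℝ) (hθ : θ ∈ Set.Icc (0 : ℝ) 1)
    (μ : ℕ → ProbabilityMeasure (Set.Icc (0 : ℝ) 1 × Set.Icc (0 : ℝ) 1))
    (hmean : Filter.Tendsto
      (fun n => ∫ p, ((p.1 : ℝ)) ∂(μ n : Measure (Set.Icc (0 : ℝ) 1 × Set.Icc (0 : ℝ) 1)))
      Filter.atTop (nhds θ))
    (hmarg : ∀ f : C(Set.Icc (0 : ℝ) 1, ℝ),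
      Filter.Tendsto
        (fun n => ∫ p, f p.1 ∂(μ n : Measure (Set.Icc (0 : ℝ) 1 × Set.Icc (0 : ℝ) 1)))
        Filter.atTop (nhds ((1 - θ) * f pt0 + θ * f pt1)))
    (hxy : Filter.Tendsto
      (fun n => ∫ p, ((p.1 : ℝ) * (p.2 : ℝ))
        ∂(μ n : Measure (Set.Icc (0 : ℝ) 1 × Set.Icc (0 : ℝ) 1)))
      Filter.atTop (nhds θ))
    (hxy' : Filter.Tendsto
      (fun n => ∫ p, ((1 - (p.1 : ℝ)) * (1 - (p.2 : ℝ)))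
        ∂(μ n : Measure (Set.Icc (0 : ℝ) 1 × Set.Icc (0 : ℝ) 1)))
      Filter.atTop (nhds (1 - θ))) :
    ∀ f : C(Set.Icc (0 : ℝ) 1 × Set.Icc (0 : ℝ) 1, ℝ),
      Filter.Tendsto
        (fun n => ∫ p, f p ∂(μ n : Measure (Set.Icc (0 : ℝ) 1 × Set.Icc (0 : ℝ) 1)))
        Filter.atTop (nhds ((1 - θ) * f (pt0, pt0) + θ * f (pt1, pt1))) := by
  -- Step 1: ∫ |x - y| → 0
  have habsc : Continuous fun p : K × K => |(p.1 : ℝ) - (p.2 : ℝ)| := by fun_prop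
  have hTc : Continuous fun p : K × K => (p.1 : ℝ) + (p.2 : ℝ) - 2 * ((p.1 : ℝ) * (p.2 : ℝ)) := by
    fun_prop
  have hT : Filter.Tendsto
      (fun n => ∫ p, ((p.1 : ℝ) + (p.2 : ℝ) - 2 * ((p.1 : ℝ) * (p.2 : ℝ))) ∂(μ n : Measure (K × K)))
      Filter.atTop (nhds 0) := by
    have hrw : ∀ n, (∫ p, ((p.1 : ℝ) + (p.2 : ℝ) - 2 * ((p.1 : ℝ) * (p.2 : ℝ)))
        ∂(μ n : Measure (K × K)))
        = 1 - (∫ p, ((1 - (p.1 : ℝ)) * (1 - (p.2 : ℝ))) ∂(μ n : Measure (K × K)))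
          - (∫ p, ((p.1 : ℝ) * (p.2 : ℝ)) ∂(μ n : Measure (K × K))) := by
      intro n
      have h1 : Integrable (fun p : K × K => (1 - (p.1 : ℝ)) * (1 - (p.2 : ℝ)))
          (μ n : Measure (K × K)) := integK (by fun_prop) _
      have h2 : Integrable (fun p : K × K => (p.1 : ℝ) * (p.2 : ℝ))
          (μ n : Measure (K × K)) := integK (by fun_prop) _
      have hc : Integrable (fun _ : K × K => (1 : ℝ)) (μ n : Measure (K × K)) :=
        integrable_const 1
      have h3 : Integrable (fun p : K × K => (1 : ℝ) - (1 - (p.1 : ℝ)) * (1 - (p.2 : ℝ)))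
          (μ n : Measure (K × K)) := integK (by fun_prop) _
      have heq : (fun p : K × K => (p.1 : ℝ) + (p.2 : ℝ) - 2 * ((p.1 : ℝ) * (p.2 : ℝ)))
          = fun p : K × K => ((1 : ℝ) - (1 - (p.1 : ℝ)) * (1 - (p.2 : ℝ))) - (p.1 : ℝ) * (p.2 : ℝ) := by
        funext p; ring
      rw [heq, integral_sub h3 h2, integral_sub hc h1]
      simp
    simp_rw [hrw]
    have := ((tendsto_const_nhds (x := (1:ℝ))).sub hxy').sub hxy
    simpa using this
  have habs0 : Filter.Tendsto
      (fun n => ∫ p, |(p.1 : ℝ) - (p.2 : ℝ)| ∂(μ n : Measure (K × K)))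
      Filter.atTop (nhds 0) := by
    apply squeeze_zero
    · intro n
      exact integral_nonneg fun p => abs_nonneg _
    · intro n
      apply integral_mono (integK habsc _) (integK hTc _)
      intro p
      have h1 := p.1.2.1; have h2 := p.1.2.2; have h3 := p.2.2.1; have h4 := p.2.2.2
      rw [abs_le]
      dsimp only
      constructor <;>
        nlinarith [mul_nonneg h1 (sub_nonneg.mpr h4), mul_nonneg h3 (sub_nonneg.mpr h2)]
    · exact hT
  -- Step 2: ∫ x(1-x) → 0
  have hq0 : Filter.Tendsto
      (fun n => ∫ p, ((p.1 : ℝ) * (1 - (p.1 : ℝ))) ∂(μ n : Measure (K × K)))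
      Filter.atTop (nhds 0) := by
    have := hmarg ⟨fun t => (t : ℝ) * (1 - (t : ℝ)), by fun_prop⟩
    simpa [pt0, pt1] using this
  -- Step 3: ∫ hfun → 0
  have hh0 : Filter.Tendsto (fun n => ∫ p, hfun p ∂(μ n : Measure (K × K)))
      Filter.atTop (nhds 0) := by
    have hrw : ∀ n, (∫ p, hfun p ∂(μ n : Measure (K × K)))
        = (∫ p, ((p.1 : ℝ) * (1 - (p.1 : ℝ))) ∂(μ n : Measure (K × K)))
          + (∫ p, |(p.1 : ℝ) - (p.2 : ℝ)| ∂(μ n : Measure (K × K))) := by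
      intro n
      exact integral_add (integK (by fun_prop) _) (integK habsc _)
    simp_rw [hrw]
    simpa using hq0.add habs0
  -- Main argument
  intro f
  set a := f (pt0, pt0) with ha
  set b := f (pt1, pt1) with hb
  set φ : K × K → ℝ := fun p => f p - (1 - (p.1 : ℝ)) * a - (p.1 : ℝ) * b with hφdef
  have hφc : Continuous φ := by
    apply Continuous.sub
    apply Continuous.sub f.continuous
    all_goals fun_prop
  have c0 : ((pt0 : K) : ℝ) = 0 := rfl
  have c1 : ((pt1 : K) : ℝ) = 1 := rfl
  have hφ00 : φ (pt0, pt0) = 0 := by simp only [hφdef, c0, ← ha]; ring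
  have hφ11 : φ (pt1, pt1) = 0 := by simp only [hφdef, c1, ← hb]; ring
  -- ∫ φ → 0
  have hφ0 : Filter.Tendsto (fun n => ∫ p, φ p ∂(μ n : Measure (K × K)))
      Filter.atTop (nhds 0) := by
    rw [NormedAddCommGroup.tendsto_nhds_zero]
    intro ε hε
    -- claim: ∃ C ≥ 0, ∀ p, |φ p| ≤ ε/2 + C * hfun p
    obtain ⟨C, hC0, hC⟩ : ∃ C : ℝ, 0 ≤ C ∧ ∀ p, |φ p| ≤ ε / 2 + C * hfun p := by
      by_cases hZ : ∃ p : K × K, ε / 2 ≤ |φ p|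
      · obtain ⟨M, hM⟩ : ∃ M : ℝ, ∀ p : K × K, |φ p| ≤ M := by
          obtain ⟨p₀, -, hp₀⟩ := isCompact_univ.exists_isMaxOn (Set.univ_nonempty)
            (hφc.abs.continuousOn (s := Set.univ))
          exact ⟨|φ p₀|, fun p => hp₀ (Set.mem_univ p)⟩
        set Z : Set (K × K) := {p | ε / 2 ≤ |φ p|} with hZdef
        have hZclosed : IsClosed Z := isClosed_le continuous_const hφc.abs
        have hZcomp : IsCompact Z := hZclosed.isCompact
        obtain ⟨p₁, hp₁Z, hp₁min⟩ := hZcomp.exists_isMinOn hZ (hfun_cont.continuousOn)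
        set δ := hfun p₁ with hδ
        have hδpos : 0 < δ := by
          rcases lt_or_eq_of_le (hfun_nonneg p₁) with h | h
          · exact h
          · exfalso
            rcases hfun_eq_zero h.symm with e | e
            · rw [e] at hp₁Z
              have hx : ε / 2 ≤ |φ (pt0, pt0)| := hp₁Z
              rw [hφ00, abs_zero] at hx; linarith
            · rw [e] at hp₁Z
              have hx : ε / 2 ≤ |φ (pt1, pt1)| := hp₁Z
              rw [hφ11, abs_zero] at hx; linarith
        have hMpos : 0 ≤ M := le_trans (abs_nonneg _) (hM p₁)
        refine ⟨M / δ, div_nonneg hMpos hδpos.le, fun p => ?_⟩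
        by_cases hp : ε / 2 ≤ |φ p|
        · have hδle : δ ≤ hfun p := hp₁min hp
          have : M / δ * δ ≤ M / δ * hfun p :=
            mul_le_mul_of_nonneg_left hδle (div_nonneg hMpos hδpos.le)
          rw [div_mul_cancel₀ M hδpos.ne'] at this
          have := le_trans (hM p) this
          linarith
        · push_neg at hp
          have := mul_nonneg (div_nonneg hMpos hδpos.le) (hfun_nonneg p)
          linarith
      · push_neg at hZ
        exact ⟨0, le_refl 0, fun p => by have := (hZ p).le; linarith⟩
    have hbound : ∀ n, ‖∫ p, φ p ∂(μ n : Measure (K × K))‖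
        ≤ ε / 2 + C * ∫ p, hfun p ∂(μ n : Measure (K × K)) := by
      intro n
      calc ‖∫ p, φ p ∂(μ n : Measure (K × K))‖
          ≤ ∫ p, |φ p| ∂(μ n : Measure (K × K)) := by
            simpa [Real.norm_eq_abs] using
              norm_integral_le_integral_norm (μ := (μ n : Measure (K × K))) φ
        _ ≤ ∫ p, (ε / 2 + C * hfun p) ∂(μ n : Measure (K × K)) := by
            apply integral_mono (integK hφc.abs _)
              ((integrable_const _).add ((integK hfun_cont _).const_mul C))
            exact hC
        _ = ε / 2 + C * ∫ p, hfun p ∂(μ n : Measure (K × K)) := by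
            rw [integral_add (integrable_const _) ((integK hfun_cont _).const_mul C),
              integral_const_mul]
            simp
    have hev : ∀ᶠ n in Filter.atTop,
        C * ∫ p, hfun p ∂(μ n : Measure (K × K)) < ε / 2 := by
      have : Filter.Tendsto (fun n => C * ∫ p, hfun p ∂(μ n : Measure (K × K)))
          Filter.atTop (nhds 0) := by simpa using hh0.const_mul C
      have := this.eventually (eventually_lt_nhds (show (0:ℝ) < ε / 2 by linarith))
      simpa using this
    filter_upwards [hev] with n hn
    exact lt_of_le_of_lt (hbound n) (by linarith)
  -- assemble
  have hX1 : Filter.Tendsto (fun n => ∫ p, (1 - (p.1 : ℝ)) ∂(μ n : Measure (K × K)))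
      Filter.atTop (nhds (1 - θ)) := by
    have hrw : ∀ n, (∫ p, (1 - (p.1 : ℝ)) ∂(μ n : Measure (K × K)))
        = 1 - ∫ p, ((p.1 : ℝ)) ∂(μ n : Measure (K × K)) := by
      intro n
      rw [integral_sub (integrable_const _) (integK (by fun_prop) _)]
      simp
    simp_rw [hrw]
    exact (tendsto_const_nhds (x := (1:ℝ))).sub hmean
  have hrw : ∀ n, (∫ p, f p ∂(μ n : Measure (K × K)))
      = (∫ p, φ p ∂(μ n : Measure (K × K)))
        + a * (∫ p, (1 - (p.1 : ℝ)) ∂(μ n : Measure (K × K)))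
        + b * (∫ p, ((p.1 : ℝ)) ∂(μ n : Measure (K × K))) := by
    intro n
    have hfeq : (fun p : K × K => f p)
        = fun p : K × K => φ p + (a * (1 - (p.1 : ℝ)) + b * (p.1 : ℝ)) := by
      funext p; simp only [hφdef]; ring
    rw [hfeq, integral_add (integK hφc _) (integK (by fun_prop) _),
      integral_add ((integK (by fun_prop) _).const_mul a) ((integK (by fun_prop) _).const_mul b),
      integral_const_mul, integral_const_mul]
    ring
  simp_rw [hrw]
  have := (hφ0.add (hX1.const_mul a)).add (hmean.const_mul b)
  have heq : (0 : ℝ) + a * (1 - θ) + b * θ = (1 - θ) * a + θ * b := by ring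
  rw [heq] at this
  exact this
end

section
/- Let K ∈ (1,∞), c ∈ (0,∞) with Kc < 1, and set E_k = (K−1)/(K^k + K − 2), c_k = c^k, e_k = e^k with c < Ke. Then A_n = (1/2) Σ_{k=0}^{n-1} (E_k/c_k)·(E_k c_k + e_k)/((E_k c_k + e_k) + E_k K^k e_k) satisfies A_n ~ ((K−1)/(2K(1−Kc))) (Kc)^{−(n−1)} as n → ∞. -/
/-- Pure exponential regime with `K > 1`, `Kc < 1`, `c < Ke`: with
`E_k = (K−1)/(K^k + K − 2)`, `c_k = c^k`, `e_k = e^k`, the clustering scale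
`A_n = (1/2) Σ_{k<n} (E_k/c_k)(E_k c_k + e_k)/((E_k c_k + e_k) + E_k K^k e_k)`
satisfies `A_n ~ ((K−1)/(2K(1−Kc))) (Kc)^{−(n−1)}` as `n → ∞`. -/
theorem stmt16 (K c e : ℝ) (hK : 1 < K) (hc : 0 < c) (hKc : K * c < 1)
    (he : 0 < e) (hce : c < K * e)
    (E : ℕ → ℝ) (hE : ∀ k, E k = (K - 1) / (K ^ k + K - 2))
    (A : ℕ → ℝ)
    (hA : ∀ n, A n = (1 / 2) * ∑ k ∈ Finset.range n,
      (E k / c ^ k) * ((E k * c ^ k + e ^ k) / ((E k * c ^ k + e ^ k) + E k * K ^ k * e ^ k))) :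
    Filter.Tendsto
      (fun n : ℕ => A n / (((K - 1) / (2 * K * (1 - K * c))) * ((K * c) ^ (n - 1))⁻¹))
      Filter.atTop (nhds 1) := by
  classical
  open Filter Finset Asymptotics in
  have hK0 : (0:ℝ) < K := lt_trans one_pos hK
  have hK1 : (0:ℝ) < K - 1 := by linarith
  have hKc0 : 0 < K * c := mul_pos hK0 hc
  have hKe0 : 0 < K * e := mul_pos hK0 he
  have h1c : 0 < 1 - K * c := by linarith
  set r : ℝ := (K * c)⁻¹ with hr_def
  have hr0 : 0 < r := inv_pos.mpr hKc0
  have hr1 : 1 < r := (one_lt_inv_iff₀).mpr ⟨hKc0, hKc⟩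
  set L : ℝ := (K - 1) / K with hL_def
  set t : ℕ → ℝ := fun k =>
    (E k / c ^ k) * ((E k * c ^ k + e ^ k) / ((E k * c ^ k + e ^ k) + E k * K ^ k * e ^ k))
    with ht_def
  have hden : ∀ k : ℕ, 0 < K ^ k + K - 2 := by
    intro k
    have h1 : (1:ℝ) ≤ K ^ k := one_le_pow₀ hK.le
    linarith
  have hE0 : ∀ k, 0 < E k := fun k => by
    rw [hE]; exact div_pos hK1 (hden k)
  -- limit of E k * K ^ k
  have hKinv : Filter.Tendsto (fun k : ℕ => (K⁻¹) ^ k) Filter.atTop (nhds 0) :=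
    tendsto_pow_atTop_nhds_zero_of_lt_one (by positivity) (inv_lt_one_of_one_lt₀ hK)
  have hf : Filter.Tendsto (fun k : ℕ => E k * K ^ k) Filter.atTop (nhds (K - 1)) := by
    have heq : ∀ k : ℕ, (K - 1) / (1 + (K - 2) * (K⁻¹) ^ k) = E k * K ^ k := by
      intro k
      have hKk : (0:ℝ) < K ^ k := pow_pos hK0 k
      have hd := hden k
      have h1 : 1 + (K - 2) * (K ^ k)⁻¹ = (K ^ k + K - 2) / K ^ k := by
        field_simp
        ring
      rw [hE, inv_pow, h1, div_div_eq_mul_div, div_mul_eq_mul_div]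
    have hd : Filter.Tendsto (fun k : ℕ => 1 + (K - 2) * (K⁻¹) ^ k) Filter.atTop (nhds 1) := by
      have := (tendsto_const_nhds (x := (1:ℝ))).add (hKinv.const_mul (K - 2))
      simpa using this
    have := (tendsto_const_nhds (x := K - 1)).div hd one_ne_zero
    simpa using this.congr heq
  -- limit of E k * c ^ k / e ^ k
  have hg : Filter.Tendsto (fun k : ℕ => E k * c ^ k / e ^ k) Filter.atTop (nhds 0) := by
    have hpow : Filter.Tendsto (fun k : ℕ => (c / (K * e)) ^ k) Filter.atTop (nhds 0) :=
      tendsto_pow_atTop_nhds_zero_of_lt_one (by positivity) ((div_lt_one hKe0).mpr hce)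
    have heq : ∀ k : ℕ, (E k * K ^ k) * (c / (K * e)) ^ k = E k * c ^ k / e ^ k := by
      intro k
      have hek : (0:ℝ) < e ^ k := pow_pos he k
      have hKk : (0:ℝ) < K ^ k := pow_pos hK0 k
      rw [div_pow, mul_pow]
      field_simp
    have := hf.mul hpow
    simpa using this.congr heq
  -- limit of t k * (K*c)^k
  have h1g : Filter.Tendsto (fun k : ℕ => E k * c ^ k / e ^ k + 1) Filter.atTop (nhds 1) := by
    simpa using hg.add tendsto_const_nhds
  have h2g : Filter.Tendsto (fun k : ℕ => (E k * c ^ k / e ^ k + 1) + E k * K ^ k)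
      Filter.atTop (nhds K) := by
    have h := h1g.add hf
    have : (1:ℝ) + (K - 1) = K := by ring
    rwa [this] at h
  have hq : ∀ k : ℕ, (E k * K ^ k) * ((E k * c ^ k / e ^ k + 1) /
      ((E k * c ^ k / e ^ k + 1) + E k * K ^ k)) = t k * (K * c) ^ k := by
    intro k
    have hek : (0:ℝ) < e ^ k := pow_pos he k
    have hck : (0:ℝ) < c ^ k := pow_pos hc k
    have hKk : (0:ℝ) < K ^ k := pow_pos hK0 k
    have hEk := hE0 k
    have hD : 0 < (E k * c ^ k + e ^ k) + E k * K ^ k * e ^ k := by positivity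
    have hD2 : 0 < (E k * c ^ k / e ^ k + 1) + E k * K ^ k := by positivity
    simp only [ht_def, mul_pow]
    field_simp
  have ht_lim : Filter.Tendsto (fun k : ℕ => t k * (K * c) ^ k) Filter.atTop (nhds L) := by
    have h : Filter.Tendsto (fun k : ℕ => (E k * K ^ k) * ((E k * c ^ k / e ^ k + 1) /
        ((E k * c ^ k / e ^ k + 1) + E k * K ^ k))) Filter.atTop (nhds ((K - 1) * 1 / K)) := by
      simpa only [Pi.div_def, mul_div_assoc] using Filter.Tendsto.div (hf.mul h1g) h2g hK0.ne'
    have hv : (K - 1) * 1 / K = L := by rw [hL_def, mul_one]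
    rw [hv] at h
    exact h.congr hq
  -- little-o step
  have hrk : ∀ k : ℕ, (r : ℝ) ^ k ≠ 0 := fun k => (pow_pos hr0 k).ne'
  have hrinv : ∀ k : ℕ, ((r : ℝ) ^ k)⁻¹ = (K * c) ^ k := by
    intro k; rw [← inv_pow, hr_def, inv_inv]
  have hlo : (fun k : ℕ => t k - L * r ^ k) =o[Filter.atTop] (fun k : ℕ => r ^ k) := by
    rw [Asymptotics.isLittleO_iff_tendsto fun k h => absurd h (hrk k)]
    have heq : ∀ k : ℕ, t k * (K * c) ^ k - L = (t k - L * r ^ k) / r ^ k := by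
      intro k
      have h1 : (t k - L * r ^ k) / r ^ k = t k / r ^ k - L * r ^ k / r ^ k := sub_div _ _ _
      rw [h1, mul_div_cancel_right₀ _ (hrk k), div_eq_mul_inv, hrinv k]
    have := ht_lim.sub_const L
    rw [sub_self] at this
    exact this.congr heq
  clear_value t
  have hG_top : Filter.Tendsto (fun n : ℕ => ∑ k ∈ Finset.range n, r ^ k)
      Filter.atTop Filter.atTop := by
    apply Filter.tendsto_atTop_mono (f := fun n : ℕ => (n : ℝ))
    · intro n
      calc (n : ℝ) = ∑ _k ∈ Finset.range n, (1:ℝ) := by simp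
        _ ≤ ∑ k ∈ Finset.range n, r ^ k :=
          Finset.sum_le_sum fun k _ => one_le_pow₀ hr1.le
    · exact tendsto_natCast_atTop_atTop
  have hslo := hlo.sum_range (fun k => (pow_pos hr0 k).le) hG_top
  have hG_pos : ∀ n : ℕ, 1 ≤ n → 0 < ∑ k ∈ Finset.range n, r ^ k := by
    intro n hn
    exact Finset.sum_pos (fun k _ => pow_pos hr0 k)
      (Finset.nonempty_range_iff.mpr (by omega))
  have hTG : Filter.Tendsto
      (fun n : ℕ => (∑ k ∈ Finset.range n, t k) / ∑ k ∈ Finset.range n, r ^ k)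
      Filter.atTop (nhds L) := by
    have h0 := hslo.tendsto_div_nhds_zero
    have h1 := h0.add_const L
    rw [zero_add] at h1
    apply h1.congr'
    filter_upwards [Filter.eventually_ge_atTop 1] with n hn
    have hGn := (hG_pos n hn).ne'
    rw [Finset.sum_sub_distrib, ← Finset.mul_sum]
    field_simp
    ring
  -- geometric sum over r^(n-1)
  have hGr : Filter.Tendsto
      (fun n : ℕ => (∑ k ∈ Finset.range n, r ^ k) / r ^ (n - 1))
      Filter.atTop (nhds (r / (r - 1))) := by
    have hrne1 : r ≠ 1 := ne_of_gt hr1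
    have hr10 : r - 1 ≠ 0 := sub_ne_zero_of_ne hr1.ne'
    have hp : Filter.Tendsto (fun n : ℕ => (r⁻¹) ^ n) Filter.atTop (nhds 0) :=
      tendsto_pow_atTop_nhds_zero_of_lt_one (by positivity) (inv_lt_one_of_one_lt₀ hr1)
    have haux : Filter.Tendsto (fun n : ℕ => (r - r * (r⁻¹) ^ n) / (r - 1))
        Filter.atTop (nhds (r / (r - 1))) := by
      have := ((tendsto_const_nhds (x := r)).sub (hp.const_mul r)).div_const (r - 1)
      simpa using this
    apply haux.congr'
    filter_upwards [Filter.eventually_ge_atTop 1] with n hn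
    obtain ⟨m, rfl⟩ : ∃ m, n = m + 1 := ⟨n - 1, by omega⟩
    have hrm : (r : ℝ) ^ m ≠ 0 := (pow_pos hr0 m).ne'
    rw [geom_sum_eq hrne1]
    simp only [Nat.add_sub_cancel, inv_pow]
    rw [pow_succ]
    field_simp
  -- final value arithmetic
  set C : ℝ := (K - 1) / (2 * K * (1 - K * c)) with hC_def
  have hC0 : 0 < C := div_pos hK1 (mul_pos (by positivity) h1c)
  have hval : L * (r / (r - 1)) * (2 * C)⁻¹ = 1 := by
    have hr10 : r - 1 ≠ 0 := sub_ne_zero_of_ne hr1.ne'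
    have h2 : r - 1 = (1 - K * c) / (K * c) := by
      rw [hr_def]; field_simp
    rw [hL_def, hC_def, hr_def, h2]
    field_simp
  have hmain := (hTG.mul hGr).mul_const (2 * C)⁻¹
  rw [hval] at hmain
  apply hmain.congr'
  filter_upwards [Filter.eventually_ge_atTop 1] with n hn
  have hGn := (hG_pos n hn).ne'
  have hrn : (r : ℝ) ^ (n - 1) ≠ 0 := (pow_pos hr0 _).ne'
  have hT : A n = (1 / 2) * ∑ k ∈ Finset.range n, t k := hA n
  have h3 : ((K * c) ^ (n - 1))⁻¹ = r ^ (n - 1) := by rw [← hrinv, inv_inv]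
  rw [hT, h3]
  have hG2 : (∑ k ∈ Finset.range n, t k) / (∑ k ∈ Finset.range n, r ^ k) *
      ((∑ k ∈ Finset.range n, r ^ k) / r ^ (n - 1)) =
      (∑ k ∈ Finset.range n, t k) / r ^ (n - 1) := by
    rw [div_mul_div_comm, mul_comm (∑ k ∈ Finset.range n, t k) (∑ k ∈ Finset.range n, r ^ k),
      mul_div_mul_left _ _ hGn]
  rw [hG2, ← div_eq_mul_inv, div_div,
    div_eq_div_iff (mul_ne_zero hrn (mul_ne_zero two_ne_zero hC0.ne'))
      (mul_ne_zero hC0.ne' hrn)]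
  ring
end
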